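/- Let G be a finite p-group generated by a normal subset T, and for k ≥ 1 define T_k = { [t₁,…,t_k] : t_i ∈ T } (left-normed commutators). Then T_k is a normal subset of G and T_k generates the k-th term γ_k(G) of the lower central series of G. -/

import Mathlib

/-- `commSet T k` is the set `T_{k+1}` of left-normed commutators
`[t₁,…,t_{k+1}] = [[…[t₁,t₂],…],t_{k+1}]` with all entries in `T`,
where `[a,t] = a⁻¹t⁻¹at`. -/
def commSet {G : Type*} [Group G] (T : Set G) : ℕ → Set G
  | 0 => T
  | k + 1 => {x | ∃ a ∈ commSet T k, ∃ t ∈ T, x = a⁻¹ * t⁻¹ * a * t}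

lemma commSet_conj {G : Type*} [Group G] (T : Set G)
    (hT : ∀ g : G, ∀ t ∈ T, g * t * g⁻¹ ∈ T) (n : ℕ) :
    ∀ g : G, ∀ x ∈ commSet T n, g * x * g⁻¹ ∈ commSet T n := by
  induction n with
  | zero => exact hT
  | succ n ih =>
    rintro g x ⟨a, ha, t, ht, rfl⟩
    exact ⟨g * a * g⁻¹, ih g a ha, g * t * g⁻¹, hT g t ht, by group⟩

lemma closure_normal_of_conj {G : Type*} [Group G] (S : Set G)
    (h : ∀ g : G, ∀ s ∈ S, g * s * g⁻¹ ∈ S) : (Subgroup.closure S).Normal := by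
  constructor
  intro x hx g
  refine Subgroup.closure_induction (p := fun x _ => g * x * g⁻¹ ∈ Subgroup.closure S)
    (fun s hs => Subgroup.subset_closure (h g s hs))
    (by show g * 1 * g⁻¹ ∈ _; simpa using one_mem _)
    (fun a b _ _ ha hb => by
      show g * (a * b) * g⁻¹ ∈ _
      have : g * (a * b) * g⁻¹ = (g * a * g⁻¹) * (g * b * g⁻¹) := by group
      rw [this]; exact mul_mem ha hb)
    (fun a _ ha => by
      show g * a⁻¹ * g⁻¹ ∈ _
      have : g * a⁻¹ * g⁻¹ = (g * a * g⁻¹)⁻¹ := by group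
      rw [this]; exact inv_mem ha) hx

open scoped commutatorElement in
lemma closure_commSet_eq {G : Type*} [Group G] (T : Set G)
    (hT : ∀ g : G, ∀ t ∈ T, g * t * g⁻¹ ∈ T)
    (hTgen : Subgroup.closure T = ⊤) :
    ∀ n : ℕ, Subgroup.closure (commSet T n) = (⊤ : Subgroup G).lowerCentralSeries n := by
  intro n
  induction n with
  | zero => simpa [commSet] using hTgen
  | succ n ih =>
    have hsucc : (⊤ : Subgroup G).lowerCentralSeries (n + 1) = ⁅(⊤ : Subgroup G).lowerCentralSeries n, ⊤⁆ := rfl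
    apply le_antisymm
    · rw [Subgroup.closure_le, hsucc]
      rintro x ⟨a, ha, t, ht, rfl⟩
      have haγ : a ∈ (⊤ : Subgroup G).lowerCentralSeries n := by
        rw [← ih]; exact Subgroup.subset_closure ha
      have hx : a⁻¹ * t⁻¹ * a * t = ⁅a⁻¹, t⁻¹⁆ := by group
      rw [SetLike.mem_coe, hx]
      exact Subgroup.commutator_mem_commutator (inv_mem haγ) (Subgroup.mem_top _)
    · haveI hN : (Subgroup.closure (commSet T (n + 1))).Normal :=
        closure_normal_of_conj _ (commSet_conj T hT (n + 1))
      set N := Subgroup.closure (commSet T (n + 1)) with hNdef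
      have hcent : ∀ a ∈ commSet T n, (a : G ⧸ N) ∈ Subgroup.center (G ⧸ N) := by
        intro a ha
        rw [Subgroup.mem_center_iff]
        intro q
        obtain ⟨g, rfl⟩ := QuotientGroup.mk_surjective q
        have hg : g ∈ Subgroup.closure T := by rw [hTgen]; exact Subgroup.mem_top g
        refine Subgroup.closure_induction
          (p := fun (g : G) _ => ((g : G ⧸ N)) * (a : G ⧸ N) = (a : G ⧸ N) * (g : G ⧸ N))
          (fun t ht => ?_)
          (by show ((1 : G) : G ⧸ N) * _ = _ * ((1 : G) : G ⧸ N); simp)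
          (fun x y _ _ hx hy => by
            show ((x * y : G) : G ⧸ N) * _ = _
            rw [QuotientGroup.mk_mul, mul_assoc, hy, ← mul_assoc, hx, mul_assoc])
          (fun x _ hx => by
            show ((x⁻¹ : G) : G ⧸ N) * _ = _
            rw [QuotientGroup.mk_inv]
            exact ((Commute.inv_left (hx : Commute _ _)) : _)) hg
        show ((t : G) : G ⧸ N) * ((a : G) : G ⧸ N) = _
        rw [← QuotientGroup.mk_mul, ← QuotientGroup.mk_mul, QuotientGroup.eq]
        have : (t * a)⁻¹ * (a * t) = a⁻¹ * t⁻¹ * a * t := by group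
        rw [this]
        exact Subgroup.subset_closure ⟨a, ha, t, ht, rfl⟩
      rw [hsucc, Subgroup.commutator_le]
      intro a ha g _
      have hc : ((a : G) : G ⧸ N) ∈ Subgroup.center (G ⧸ N) := by
        rw [← ih] at ha
        refine Subgroup.closure_induction
          (p := fun (x : G) _ => ((x : G ⧸ N)) ∈ Subgroup.center (G ⧸ N))
          (fun x hx => hcent x hx)
          (by show ((1 : G) : G ⧸ N) ∈ _; simpa using one_mem _)
          (fun x y _ _ hx hy => by
            show ((x * y : G) : G ⧸ N) ∈ _
            rw [QuotientGroup.mk_mul]; exact mul_mem hx hy)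
          (fun x _ hx => by
            show ((x⁻¹ : G) : G ⧸ N) ∈ _
            rw [QuotientGroup.mk_inv]; exact inv_mem hx) ha
      rw [← QuotientGroup.eq_one_iff (N := N)]
      have hmap : ((⁅a, g⁆ : G) : G ⧸ N) = ⁅((a : G) : G ⧸ N), ((g : G) : G ⧸ N)⁆ :=
        map_commutatorElement (QuotientGroup.mk' N) a g
      rw [hmap, commutatorElement_eq_one_iff_commute]
      exact ((Subgroup.mem_center_iff.1 hc _)).symm

/-- If `G` is a finite `p`-group generated by a normal subset `T`,
then for every `k ≥ 1` the set `T_k` of left-normed commutators of length `k`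
in elements of `T` is a normal subset of `G` generating `γ_k(G)`
(which is `lowerCentralSeries G (k-1)` in Mathlib's indexing). -/
theorem stmt8 (p : ℕ) (hp : p.Prime) (G : Type*) [Group G] [Finite G]
    (hG : IsPGroup p G) (T : Set G)
    (hTnormal : ∀ g : G, ∀ t ∈ T, g * t * g⁻¹ ∈ T)
    (hTgen : Subgroup.closure T = ⊤) (k : ℕ) (hk : 1 ≤ k) :
    (∀ g : G, ∀ x ∈ commSet T (k - 1), g * x * g⁻¹ ∈ commSet T (k - 1)) ∧
      Subgroup.closure (commSet T (k - 1)) = (⊤ : Subgroup G).lowerCentralSeries (k - 1) := by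
  exact ⟨commSet_conj T hTnormal (k - 1), closure_commSet_eq T hTnormal hTgen (k - 1)⟩
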